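/- Let m ≥ 2, n ≥ 1, x₁, …, x_m ∈ (0,1), and x̄ = (x₁ + ⋯ + x_m)/m. If X₍₁₎, …, X₍ₘ₎ are independent with X₍ᵢ₎ ∼ B(n, x_i), then X₍₁₎ + ⋯ + X₍ₘ₎ ≤_cx S*, where S* ∼ B(mn, x̄): for every convex f : ℝ → ℝ, E f(X₍₁₎+⋯+X₍ₘ₎) ≤ ∑_{k=0}^{mn} C(mn,k)·x̄^k·(1−x̄)^{mn−k}·f(k). -/

import Mathlib

open Finset MeasureTheory ProbabilityTheory

/-- The binomial distribution `B(n,p)` as a measure on `ℝ`. -/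
noncomputable def binMeasure (n : ℕ) (p : ℝ) : Measure ℝ :=
  ∑ k ∈ range (n + 1),
    ENNReal.ofReal ((n.choose k : ℝ) * p ^ k * (1 - p) ^ (n - k)) • Measure.dirac (k : ℝ)


namespace BinCx

/-- Expectation of `g` of a sum of independent Bernoulli variables with parameters `l`. -/
noncomputable def E : List ℝ → (ℕ → ℝ) → ℝ
  | [], g => g 0
  | p :: l, g => (1 - p) * E l g + p * E l (fun k => g (k + 1))

@[simp] lemma E_nil (g : ℕ → ℝ) : E [] g = g 0 := rfl

@[simp] lemma E_cons (p : ℝ) (l : List ℝ) (g : ℕ → ℝ) :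
    E (p :: l) g = (1 - p) * E l g + p * E l (fun k => g (k + 1)) := rfl

lemma E_nonneg : ∀ (l : List ℝ), (∀ p ∈ l, p ∈ Set.Icc (0:ℝ) 1) →
    ∀ (g : ℕ → ℝ), (∀ k, 0 ≤ g k) → 0 ≤ E l g
  | [], _, g, hg => hg 0
  | p :: l, hl, g, hg => by
    have hp := hl p (by simp)
    have h1 := E_nonneg l (fun q hq => hl q (by simp [hq])) g hg
    have h2 := E_nonneg l (fun q hq => hl q (by simp [hq])) (fun k => g (k+1)) (fun k => hg _)
    have : (0:ℝ) ≤ 1 - p := by linarith [hp.2]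
    rw [E_cons]
    nlinarith [mul_nonneg this h1, mul_nonneg hp.1 h2]

lemma E_lin (u v : ℕ → ℝ) (c : ℝ) :
    ∀ (l : List ℝ), E l (fun k => u k + c * v k) = E l u + c * E l v
  | [] => by simp
  | p :: l => by
    simp only [E_cons]
    rw [E_lin u v c l, E_lin (fun k => u (k+1)) (fun k => v (k+1)) c l]
    ring

lemma E_perm {l₁ l₂ : List ℝ} (h : l₁.Perm l₂) : ∀ g, E l₁ g = E l₂ g := by
  induction h with
  | nil => intro g; rfl
  | cons x h ih => intro g; simp [E_cons, ih]
  | swap x y l => intro g; simp only [E_cons]; ring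
  | trans h₁ h₂ ih₁ ih₂ => intro g; rw [ih₁ g, ih₂ g]

lemma E_append : ∀ (l₁ l₂ : List ℝ) (g : ℕ → ℝ),
    E (l₁ ++ l₂) g = E l₁ (fun a => E l₂ (fun b => g (a + b)))
  | [], l₂, g => by simp
  | p :: l₁, l₂, g => by
    simp only [List.cons_append, E_cons]
    rw [E_append l₁ l₂ g, E_append l₁ l₂ (fun k => g (k+1))]
    congr 1
    congr 1
    apply congrArg
    funext a
    apply congrArg
    funext b
    congr 1
    omega

end BinCx

namespace BinCx

/-- Binomial expectation. -/
noncomputable def B (n : ℕ) (p : ℝ) (g : ℕ → ℝ) : ℝ :=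
  ∑ j ∈ range (n + 1), (n.choose j : ℝ) * p ^ j * (1 - p) ^ (n - j) * g j

lemma E_replicate (p : ℝ) : ∀ (n : ℕ) (g : ℕ → ℝ), E (List.replicate n p) g = B n p g
  | 0, g => by simp [B, E]
  | n + 1, g => by
    rw [List.replicate_succ, E_cons, E_replicate p n g, E_replicate p n (fun k => g (k+1))]
    have expand : ∀ h : ℕ → ℝ, B (n+1) p h =
        (∑ i ∈ range (n + 1), ((n.choose i : ℝ) + (n.choose (i+1) : ℝ))
          * p ^ (i+1) * (1 - p) ^ (n - i) * h (i+1)) + (1-p)^(n+1) * h 0 := by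
      intro h
      rw [B, Finset.sum_range_succ']
      congr 1
      · apply Finset.sum_congr rfl
        intro i hi
        have he : n + 1 - (i+1) = n - i := by omega
        rw [Nat.choose_succ_succ, he]
        push_cast
        ring
      · simp
    rw [expand]
    have split : ∀ i ∈ range (n+1),
        ((n.choose i : ℝ) + (n.choose (i+1) : ℝ)) * p ^ (i+1) * (1 - p) ^ (n - i) * g (i+1)
        = p * ((n.choose i : ℝ) * p ^ i * (1 - p) ^ (n - i) * g (i+1))
          + (n.choose (i+1) : ℝ) * p ^ (i+1) * (1 - p) ^ (n - i) * g (i+1) := by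
      intro i hi; ring
    rw [Finset.sum_congr rfl split, Finset.sum_add_distrib]
    have h1 : ∑ i ∈ range (n+1), p * ((n.choose i : ℝ) * p ^ i * (1 - p) ^ (n - i) * g (i+1))
        = p * B n p (fun k => g (k+1)) := by
      rw [B, Finset.mul_sum]
    have h2 : (∑ i ∈ range (n+1), (n.choose (i+1) : ℝ) * p ^ (i+1) * (1 - p) ^ (n - i) * g (i+1))
        + (1-p)^(n+1) * g 0 = (1 - p) * B n p g := by
      have hL : (∑ i ∈ range (n+1), (n.choose (i+1) : ℝ) * p ^ (i+1) * (1 - p) ^ (n - i) * g (i+1))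
          = ∑ i ∈ range n, (n.choose (i+1) : ℝ) * p ^ (i+1) * (1 - p) ^ (n - i) * g (i+1) := by
        rw [Finset.sum_range_succ, Nat.choose_eq_zero_of_lt (by omega)]
        simp
      have hR : (1 - p) * B n p g
          = (∑ i ∈ range n,
              (1-p) * ((n.choose (i+1) : ℝ) * p ^ (i+1) * (1 - p) ^ (n - (i+1)) * g (i+1)))
            + (1-p) * ((n.choose 0 : ℝ) * p ^ 0 * (1 - p) ^ (n - 0) * g 0) := by
        rw [B, Finset.mul_sum, Finset.sum_range_succ']
      have hterm : ∀ i ∈ range n,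
          (n.choose (i+1) : ℝ) * p ^ (i+1) * (1 - p) ^ (n - i) * g (i+1)
          = (1-p) * ((n.choose (i+1):ℝ) * p ^ (i+1) * (1 - p) ^ (n - (i+1)) * g (i+1)) := by
        intro i hi
        rw [Finset.mem_range] at hi
        have h3 : n - i = (n - (i+1)) + 1 := by omega
        rw [h3, pow_succ]
        ring
      rw [hL, hR, Finset.sum_congr rfl hterm]
      simp [pow_succ]
      ring
    rw [h1, ← h2]
    ring

end BinCx

namespace BinCx

/-- Second-difference positivity gives the Schur pair step. -/
lemma schur_pair {a b a' b' : ℝ} (hsum : a + b = a' + b') (hprod : a * b ≤ a' * b')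
    (l : List ℝ) (hl : ∀ p ∈ l, p ∈ Set.Icc (0:ℝ) 1)
    (g : ℕ → ℝ) (hg : ∀ k, 2 * g (k+1) ≤ g k + g (k+2)) :
    E (a :: b :: l) g ≤ E (a' :: b' :: l) g := by
  have key : ∀ u v : ℝ, E (u :: v :: l) g
      = E l g + (u + v) * (E l (fun k => g (k+1)) - E l g)
        + (u * v) * (E l g - 2 * E l (fun k => g (k+1)) + E l (fun k => g (k+2))) := by
    intro u v
    simp only [E_cons]
    ring
  rw [key a b, key a' b', hsum]
  have hE : 0 ≤ E l g - 2 * E l (fun k => g (k+1)) + E l (fun k => g (k+2)) := by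
    have h1 : E l (fun k => (g k + g (k+2)) + (-2) * g (k+1))
        = E l (fun k => g k + g (k+2)) + (-2) * E l (fun k => g (k+1)) := by
      exact E_lin _ _ _ l
    have h2 : E l (fun k => g k + (1:ℝ) * g (k+2)) = E l g + 1 * E l (fun k => g (k+2)) :=
      E_lin _ _ _ l
    have h3 : 0 ≤ E l (fun k => (g k + g (k+2)) + (-2) * g (k+1)) := by
      apply E_nonneg l hl
      intro k
      have := hg k
      linarith
    simp only [one_mul] at h2
    rw [h1, h2] at h3
    linarith
  nlinarith [hE, hprod]

lemma sum_ge_of_forall_ge : ∀ (l : List ℝ) (q : ℝ), (∀ p ∈ l, q ≤ p) →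
    q * l.length ≤ l.sum
  | [], q, _ => by simp
  | a :: t, q, h => by
    have h1 := sum_ge_of_forall_ge t q (fun p hp => h p (by simp [hp]))
    have h2 := h a (by simp)
    simp only [List.sum_cons, List.length_cons]
    push_cast
    linarith

lemma all_eq_of_sum_eq : ∀ (l : List ℝ) (q : ℝ), (∀ p ∈ l, q ≤ p) →
    l.sum = q * l.length → ∀ p ∈ l, p = q
  | [], q, _, _, p, hp => by simp at hp
  | a :: t, q, h, hs, p, hp => by
    have h1 := sum_ge_of_forall_ge t q (fun r hr => h r (by simp [hr]))
    have h2 := h a (by simp)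
    simp only [List.sum_cons, List.length_cons] at hs
    push_cast at hs
    have ha : a = q := by linarith
    have hts : t.sum = q * t.length := by linarith
    rcases List.mem_cons.1 hp with rfl | hp'
    · exact ha
    · exact all_eq_of_sum_eq t q (fun r hr => h r (by simp [hr])) hts p hp'

lemma sum_map_neg : ∀ (l : List ℝ), (l.map Neg.neg).sum = -l.sum
  | [] => by simp
  | a :: t => by simp [sum_map_neg t]; ring

lemma all_eq_of_sum_eq' (l : List ℝ) (q : ℝ) (h : ∀ p ∈ l, p ≤ q)
    (hs : l.sum = q * l.length) : ∀ p ∈ l, p = q := by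
  have h1 : ∀ p ∈ l.map Neg.neg, -q ≤ p := by
    intro p hp
    rcases List.mem_map.1 hp with ⟨r, hr, rfl⟩
    have := h r hr
    linarith
  have h2 : (l.map Neg.neg).sum = (-q) * (l.map Neg.neg).length := by
    rw [sum_map_neg, List.length_map, hs]
    push_cast
    ring
  intro p hp
  have := all_eq_of_sum_eq (l.map Neg.neg) (-q) h1 h2 (-p)
    (List.mem_map.2 ⟨p, hp, rfl⟩)
  linarith

end BinCx

namespace BinCx

open scoped Classical in
lemma E_le_replicate_aux (g : ℕ → ℝ) (hg : ∀ k, 2 * g (k+1) ≤ g k + g (k+2)) (q : ℝ) :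
    ∀ (c : ℕ) (l : List ℝ), (∀ p ∈ l, p ∈ Set.Icc (0:ℝ) 1) →
      l.sum = q * l.length → l.countP (fun p => decide (p ≠ q)) ≤ c →
      E l g ≤ E (List.replicate l.length q) g := by
  intro c
  induction c with
  | zero =>
    intro l hl hsum hc
    have hall : ∀ p ∈ l, p = q := by
      intro p hp
      have := List.countP_eq_zero.1 (Nat.le_zero.1 hc) p hp
      simpa using this
    have : l = List.replicate l.length q := by
      rw [List.eq_replicate_iff]
      exact ⟨rfl, hall⟩
    rw [← this]
  | succ c ih =>
    intro l hl hsum hc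
    by_cases h0 : l.countP (fun p => decide (p ≠ q)) = 0
    · have hall : ∀ p ∈ l, p = q := by
        intro p hp
        have := List.countP_eq_zero.1 h0 p hp
        simpa using this
      have : l = List.replicate l.length q := by
        rw [List.eq_replicate_iff]
        exact ⟨rfl, hall⟩
      rw [← this]
    · obtain ⟨p₀, hp₀l, hp₀⟩ := List.countP_pos_iff.1 (Nat.pos_of_ne_zero h0)
      have hp₀q : p₀ ≠ q := by simpa using hp₀
      -- find a < q
      have ha : ∃ a ∈ l, a < q := by
        by_contra hcon
        push_neg at hcon
        have := all_eq_of_sum_eq l q (fun p hp => hcon p hp) hsum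
        exact hp₀q (this p₀ hp₀l)
      -- find b > q
      have hb : ∃ b ∈ l, q < b := by
        by_contra hcon
        push_neg at hcon
        have := all_eq_of_sum_eq' l q (fun p hp => hcon p hp) hsum
        exact hp₀q (this p₀ hp₀l)
      obtain ⟨a, hal, haq⟩ := ha
      obtain ⟨b, hbl, hqb⟩ := hb
      have hab : a ≠ b := by intro h; rw [h] at haq; linarith
      have hbe : b ∈ l.erase a := (List.mem_erase_of_ne (Ne.symm hab)).2 hbl
      set t := (l.erase a).erase b with ht
      have hperm : l.Perm (a :: b :: t) := by
        refine (List.perm_cons_erase hal).trans ?_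
        exact List.Perm.cons a (List.perm_cons_erase hbe)
      -- properties of t
      have htmem : ∀ p ∈ t, p ∈ Set.Icc (0:ℝ) 1 := by
        intro p hp
        apply hl
        have h1 : p ∈ l.erase a := List.erase_sublist.subset hp
        exact List.erase_sublist.subset h1
      have hla := hl a hal
      have hlb := hl b hbl
      have hq01 : q ∈ Set.Icc (0:ℝ) 1 := ⟨le_trans hla.1 haq.le, le_trans hqb.le hlb.2⟩
      have habq : a + b - q ∈ Set.Icc (0:ℝ) 1 := by
        constructor
        · have : a ≤ a + b - q := by linarith
          linarith [hla.1]
        · have : a + b - q ≤ b := by linarith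
          linarith [hlb.2]
      -- Schur step
      set l₂ := q :: (a + b - q) :: t with hl₂
      have hstep : E (a :: b :: t) g ≤ E l₂ g := by
        apply schur_pair (by ring) ?_ t htmem g hg
        nlinarith [mul_nonneg (sub_nonneg.2 haq.le) (sub_nonneg.2 hqb.le)]
      have hlen2 : l₂.length = l.length := by
        rw [hperm.length_eq]
        simp [hl₂]
      have hsum2 : l₂.sum = q * l₂.length := by
        have hsl : l.sum = (a :: b :: t).sum := hperm.sum_eq
        simp only [List.sum_cons] at hsl
        rw [hlen2]
        simp only [hl₂, List.sum_cons]
        rw [← hsum] at *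
        linarith [hsl]
      have hmem2 : ∀ p ∈ l₂, p ∈ Set.Icc (0:ℝ) 1 := by
        intro p hp
        rcases List.mem_cons.1 hp with rfl | hp
        · exact hq01
        rcases List.mem_cons.1 hp with rfl | hp
        · exact habq
        · exact htmem p hp
      have hcount2 : l₂.countP (fun p => decide (p ≠ q)) ≤ c := by
        have hcl : l.countP (fun p => decide (p ≠ q))
            = (a :: b :: t).countP (fun p => decide (p ≠ q)) := hperm.countP_eq _
        have h1 : (a :: b :: t).countP (fun p => decide (p ≠ q))
            = t.countP (fun p => decide (p ≠ q)) + 2 := by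
          have h1a : (decide ¬(a = q)) = true := decide_eq_true haq.ne
          have h1b : (decide ¬(b = q)) = true := decide_eq_true (ne_of_gt hqb)
          simp only [List.countP_cons, ne_eq, h1a, h1b, if_true]
        have h2 : l₂.countP (fun p => decide (p ≠ q))
            ≤ t.countP (fun p => decide (p ≠ q)) + 1 := by
          have h2q : (decide (q ≠ q)) = false := by simp
          simp only [hl₂, List.countP_cons, h2q, Bool.false_eq_true, if_false]
          split_ifs <;> omega
        omega
      have hfin := ih l₂ hmem2 hsum2 hcount2
      calc E l g = E (a :: b :: t) g := E_perm hperm g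
        _ ≤ E l₂ g := hstep
        _ ≤ E (List.replicate l₂.length q) g := hfin
        _ = E (List.replicate l.length q) g := by rw [hlen2]
end BinCx

namespace BinCx

/-- The list of Bernoulli parameters: `n` copies of each `x i`. -/
noncomputable def blocks (n : ℕ) : (m : ℕ) → (Fin m → ℝ) → List ℝ
  | 0, _ => []
  | m + 1, x => List.replicate n (x 0) ++ blocks n m (fun i => x i.succ)

lemma blocks_length (n : ℕ) : ∀ (m : ℕ) (x : Fin m → ℝ), (blocks n m x).length = m * n
  | 0, _ => by simp [blocks]
  | m + 1, x => by
    simp only [blocks, List.length_append, List.length_replicate,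
      blocks_length n m (fun i => x i.succ)]
    ring

lemma blocks_sum (n : ℕ) : ∀ (m : ℕ) (x : Fin m → ℝ),
    (blocks n m x).sum = (n : ℝ) * ∑ i, x i
  | 0, _ => by simp [blocks]
  | m + 1, x => by
    simp only [blocks, List.sum_append, List.sum_replicate, blocks_sum n m (fun i => x i.succ),
      Fin.sum_univ_succ, nsmul_eq_mul]
    ring

lemma blocks_mem (n : ℕ) : ∀ (m : ℕ) (x : Fin m → ℝ), (∀ i, x i ∈ Set.Icc (0:ℝ) 1) →
    ∀ p ∈ blocks n m x, p ∈ Set.Icc (0:ℝ) 1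
  | 0, _, _, p, hp => by simp [blocks] at hp
  | m + 1, x, hx, p, hp => by
    simp only [blocks, List.mem_append] at hp
    rcases hp with hp | hp
    · rcases List.eq_of_mem_replicate hp with rfl
      exact hx 0
    · exact blocks_mem n m (fun i => x i.succ) (fun i => hx i.succ) p hp

/-- Decompose a sum over `Fin (m+1)`-tuples. -/
lemma sum_piFinset_succ {γ : Type*} [DecidableEq γ] {M : Type*} [AddCommMonoid M]
    (m : ℕ) (t : Finset γ) (G : (Fin (m+1) → γ) → M) :
    ∑ k ∈ Fintype.piFinset (fun _ : Fin (m+1) => t), G k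
      = ∑ j ∈ t, ∑ k ∈ Fintype.piFinset (fun _ : Fin m => t), G (Fin.cons j k) := by
  rw [← Finset.sum_product']
  apply Finset.sum_nbij' (i := fun k => ((k 0 : γ), Fin.tail k))
    (j := fun q => Fin.cons q.1 q.2)
  · intro k hk
    simp only [Finset.mem_product, Fintype.mem_piFinset] at *
    exact ⟨hk 0, fun i => hk i.succ⟩
  · intro q hq
    simp only [Finset.mem_product, Fintype.mem_piFinset] at *
    intro i
    refine Fin.cases ?_ ?_ i
    · simpa using hq.1
    · intro r
      simpa using hq.2 r
  · intro k hk
    exact Fin.cons_self_tail k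
  · intro q hq
    simp [Fin.tail_cons]
  · intro k hk
    exact (congrArg G (Fin.cons_self_tail k)).symm

/-- Binomial weight. -/
noncomputable def w (n : ℕ) (p : ℝ) (j : ℕ) : ℝ := (n.choose j : ℝ) * p ^ j * (1 - p) ^ (n - j)

lemma tuple_eq (n : ℕ) : ∀ (m : ℕ) (x : Fin m → ℝ) (g : ℕ → ℝ),
    ∑ k ∈ Fintype.piFinset (fun _ : Fin m => range (n+1)),
      (∏ i, w n (x i) (k i)) * g (∑ i, k i) = E (blocks n m x) g
  | 0, x, g => by simp [blocks, E]
  | m + 1, x, g => by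
    rw [sum_piFinset_succ, blocks, E_append, E_replicate, B]
    apply Finset.sum_congr rfl
    intro j hj
    have hIH := tuple_eq n m (fun i => x i.succ) (fun b => g (j + b))
    have hterm : ∀ k ∈ Fintype.piFinset (fun _ : Fin m => range (n+1)),
        (∏ i, w n (x i) ((Fin.cons j k : Fin (m+1) → ℕ) i)) * g (∑ i, (Fin.cons j k : Fin (m+1) → ℕ) i)
          = w n (x 0) j * ((∏ i, w n (x i.succ) (k i)) * g (j + ∑ i, k i)) := by
      intro k hk
      rw [Fin.prod_univ_succ, Fin.sum_univ_succ]
      simp only [Fin.cons_zero, Fin.cons_succ]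
      rw [mul_assoc]
    rw [Finset.sum_congr rfl hterm, ← Finset.mul_sum, hIH, w]

end BinCx

open MeasureTheory ProbabilityTheory BinCx


lemma binMeasure_finite (n : ℕ) (p : ℝ) : IsFiniteMeasure (binMeasure n p) := by
  constructor
  rw [binMeasure, Measure.finset_sum_apply]
  refine ENNReal.sum_lt_top.2 fun j hj => ?_
  rw [Measure.smul_apply, smul_eq_mul]
  have hd : Measure.dirac (j:ℝ) Set.univ = 1 := measure_univ
  rw [hd, mul_one]
  exact ENNReal.ofReal_lt_top

lemma binMeasure_apply (n : ℕ) (p : ℝ) {s : Set ℝ} (hs : MeasurableSet s) :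
    binMeasure n p s = ∑ j ∈ range (n + 1),
      ENNReal.ofReal ((n.choose j : ℝ) * p ^ j * (1 - p) ^ (n - j)) * s.indicator 1 (j:ℝ) := by
  rw [binMeasure, Measure.finset_sum_apply]
  refine Finset.sum_congr rfl fun j hj => ?_
  rw [Measure.smul_apply, smul_eq_mul, Measure.dirac_apply' _ hs]

/-- Proposition 3 (i): a sum of `m` independent `B(n, xᵢ)` variables is
dominated in the convex order by `B(mn, x̄)`. -/
theorem sum_binomials_cx_binomial_mean {Ω : Type*} [MeasurableSpace Ω]
    (μ : Measure Ω) [IsProbabilityMeasure μ] (m n : ℕ) (hm : 2 ≤ m) (hn : 1 ≤ n)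
    (x : Fin m → ℝ) (hx : ∀ i, x i ∈ Set.Ioo (0:ℝ) 1)
    (X : Fin m → Ω → ℝ) (hmeas : ∀ i, Measurable (X i))
    (hindep : iIndepFun X μ)
    (hdist : ∀ i, μ.map (X i) = binMeasure n (x i))
    (f : ℝ → ℝ) (hf : ConvexOn ℝ Set.univ f) :
    ∫ ω, f (∑ i, X i ω) ∂μ
      ≤ ∑ k ∈ range (m * n + 1),
          ((m * n).choose k : ℝ) * ((∑ i, x i) / m) ^ k *
            (1 - (∑ i, x i) / m) ^ (m * n - k) * f k := by
  classical
  set q : ℝ := (∑ i, x i) / m with hq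
  set F : ℕ → ℝ := fun k => f (k : ℝ) with hF
  -- continuity and convexity facts
  have hfc : Continuous f := by
    rw [← continuousOn_univ]
    exact hf.continuousOn isOpen_univ
  have hF2 : ∀ k, 2 * F (k+1) ≤ F k + F (k+2) := by
    intro k
    have h := hf.2 (Set.mem_univ (k : ℝ)) (Set.mem_univ ((k : ℝ) + 2))
      (by norm_num : (0:ℝ) ≤ 1/2) (by norm_num : (0:ℝ) ≤ 1/2) (by norm_num)
    simp only [smul_eq_mul] at h
    have he : (1/2 : ℝ) * (k:ℝ) + (1/2) * ((k:ℝ)+2) = (k:ℝ) + 1 := by ring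
    rw [he] at h
    have h1 : F (k+1) = f ((k:ℝ)+1) := by simp [hF]
    have h2 : F (k+2) = f ((k:ℝ)+2) := by simp [hF]
    rw [h1, h2]
    simp only [hF]
    linarith
  -- the joint law
  set wt : Fin m → ℕ → ENNReal := fun i j => ENNReal.ofReal (w n (x i) j) with hwt
  set K := Fintype.piFinset (fun _ : Fin m => range (n+1)) with hK
  set D : Measure (Fin m → ℝ) :=
    ∑ k ∈ K, (∏ i, wt i (k i)) • Measure.dirac (fun i => ((k i : ℕ) : ℝ)) with hD
  set J : Ω → (Fin m → ℝ) := fun ω i => X i ω with hJ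
  have hJm : Measurable J := measurable_pi_lambda _ hmeas
  haveI : ∀ i, IsFiniteMeasure (binMeasure n (x i)) := fun i => binMeasure_finite n (x i)
  haveI hsf : ∀ i, SigmaFinite (binMeasure n (x i)) := fun i => inferInstance
  have h1 : Measure.pi (fun i => binMeasure n (x i)) = μ.map J := by
    refine Measure.pi_eq fun s hs => ?_
    rw [Measure.map_apply hJm (MeasurableSet.univ_pi hs)]
    have hpre : J ⁻¹' Set.pi Set.univ s = ⋂ i ∈ (Finset.univ : Finset (Fin m)), X i ⁻¹' s i := by
      ext ω
      simp [Set.mem_pi, hJ]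
    rw [hpre, hindep.measure_inter_preimage_eq_mul Finset.univ (fun i _ => hs i)]
    refine Finset.prod_congr rfl fun i _ => ?_
    rw [← hdist i, Measure.map_apply (hmeas i) (hs i)]
  have h2 : Measure.pi (fun i => binMeasure n (x i)) = D := by
    refine Measure.pi_eq fun s hs => ?_
    rw [hD, Measure.finset_sum_apply]
    have hterm : ∀ k ∈ K, ((∏ i, wt i (k i)) • Measure.dirac
          (fun i => ((k i : ℕ) : ℝ))) (Set.pi Set.univ s)
        = ∏ i, (wt i (k i) * (s i).indicator 1 ((k i : ℕ) : ℝ)) := by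
      intro k hk
      rw [Measure.smul_apply, smul_eq_mul,
        Measure.dirac_apply' _ (MeasurableSet.univ_pi hs)]
      rw [Finset.prod_mul_distrib]
      congr 1
      by_cases hmem : ∀ i, ((k i : ℕ) : ℝ) ∈ s i
      · rw [Set.indicator_of_mem (by simpa [Set.mem_pi] using hmem)]
        symm
        refine Finset.prod_eq_one fun i _ => ?_
        rw [Set.indicator_of_mem (hmem i)]
        rfl
      · push_neg at hmem
        obtain ⟨i, hi⟩ := hmem
        rw [Set.indicator_of_notMem (by simpa [Set.mem_pi] using ⟨i, hi⟩)]
        symm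
        exact Finset.prod_eq_zero (Finset.mem_univ i) (by rw [Set.indicator_of_notMem hi])
    rw [Finset.sum_congr rfl hterm, hK]
    have hps := Finset.prod_univ_sum (fun _ : Fin m => range (n+1))
      (fun i j => wt i j * (s i).indicator 1 ((j : ℕ) : ℝ))
    rw [← hps]
    refine Finset.prod_congr rfl fun i _ => ?_
    rw [binMeasure_apply n (x i) (hs i)]
    simp only [hwt, w]
  have hmap : μ.map J = D := h1.symm.trans h2
  -- compute the integral
  have hgc : Continuous (fun y : Fin m → ℝ => f (∑ i, y i)) :=
    hfc.comp (continuous_finset_sum _ (fun i _ => continuous_apply i))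
  have hint : ∫ ω, f (∑ i, X i ω) ∂μ = ∫ y, f (∑ i, y i) ∂(μ.map J) := by
    rw [integral_map hJm.aemeasurable hgc.aestronglyMeasurable]
  rw [hint, hmap, hD]
  have hwnn : ∀ i j, 0 ≤ w n (x i) j := by
    intro i j
    have h1 := (hx i).1.le
    have h2 : (0:ℝ) ≤ 1 - x i := by linarith [(hx i).2.le]
    unfold w
    positivity
  have hIdirac : ∀ (pt : Fin m → ℝ),
      Integrable (fun y : Fin m → ℝ => f (∑ i, y i)) (Measure.dirac pt) := by
    intro pt
    refine ⟨hgc.aestronglyMeasurable, ?_⟩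
    rw [HasFiniteIntegral]
    rw [lintegral_dirac' _ (by exact hgc.measurable.nnnorm.coe_nnreal_ennreal)]
    exact ENNReal.coe_lt_top
  have hprodne : ∀ k : Fin m → ℕ, (∏ i, wt i (k i)) ≠ ⊤ := by
    intro k
    exact (ENNReal.prod_lt_top fun i _ => ENNReal.ofReal_lt_top).ne
  rw [integral_finset_sum_measure (fun k hk =>
    (hIdirac _).smul_measure (hprodne k))]
  have hterm2 : ∀ k ∈ K, ∫ y, f (∑ i, y i)
        ∂((∏ i, wt i (k i)) • Measure.dirac (fun i => ((k i : ℕ) : ℝ)))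
      = (∏ i, w n (x i) (k i)) * F (∑ i, k i) := by
    intro k hk
    rw [integral_smul_measure,
      integral_dirac' _ _ hgc.stronglyMeasurable]
    have htr : (∏ i, wt i (k i)).toReal = ∏ i, w n (x i) (k i) := by
      rw [ENNReal.toReal_prod]
      exact Finset.prod_congr rfl fun i _ => ENNReal.toReal_ofReal (hwnn i (k i))
    rw [htr]
    have hcast : (∑ i, ((k i : ℕ) : ℝ)) = ((∑ i, k i : ℕ) : ℝ) := by push_cast; ring
    rw [smul_eq_mul, hcast]
  rw [Finset.sum_congr rfl hterm2]
  -- now pure combinatorics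
  rw [tuple_eq n m x F]
  have hmne : (m : ℝ) ≠ 0 := Nat.cast_ne_zero.2 (by omega)
  have hlen := blocks_length n m x
  have hmemb := blocks_mem n m x (fun i => ⟨(hx i).1.le, (hx i).2.le⟩)
  have hsumb : (blocks n m x).sum = q * (blocks n m x).length := by
    rw [blocks_sum, hlen, hq]
    push_cast
    field_simp
  calc E (blocks n m x) F
      ≤ E (List.replicate (blocks n m x).length q) F :=
        E_le_replicate_aux F hF2 q _ (blocks n m x) hmemb hsumb le_rfl
    _ = B (m*n) q F := by rw [hlen, E_replicate]
    _ = _ := by rw [B]
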